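/- arXiv:1403.3319 — 4 statements merged into one kernel-verified Lean document; each statement's English description precedes it below -/
import Mathlib

section
/- For every integer n ≥ 0, the power series expansion of u_n(z) = (-1)^{n+1} (1-z)^n log(1-z) = ∑_{m=0}^∞ u_{n,m} z^m converges for |z| < 1, and the coefficients satisfy u_{n,m} > 0 for all m > n. -/
open Finset Nat
open scoped ENNReal NNReal

/-- Auxiliary combinatorial identity:
`∑_{j=0}^{n} (-1)^{n+j} C(n,j) / (n+1+k-j) = n! k! / (n+1+k)!`. -/
lemma stmt0_auxS (n : ℕ) : ∀ k : ℕ,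
    (∑ j ∈ Finset.range (n+1),
      (-1:ℝ)^(n+j) * (n.choose j) * ((n:ℝ)+1+k - j)⁻¹)
      = (n ! : ℝ) * k ! / (n+1+k)! := by
  induction n with
  | zero =>
    intro k
    rw [Finset.sum_range_one]
    have e : 0+1+k = k+1 := by omega
    rw [e, Nat.factorial_succ]
    have hk : (0:ℝ) < 1 + (k:ℝ) := by positivity
    push_cast
    field_simp
    simp only [Nat.choose_self, Nat.cast_one, one_mul]
    rw [Nat.factorial_zero, Nat.cast_one, div_eq_one_iff_eq (ne_of_gt (by linarith))]
    ring
  | succ n ih =>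
    intro k
    have h2 : (∑ j ∈ Finset.range (n+2),
          (-1:ℝ)^(n+j) * (n.choose j) * ((n:ℝ)+1+(k+1) - j)⁻¹)
        = ∑ j ∈ Finset.range (n+1), (-1:ℝ)^(n+j) * (n.choose j) * ((n:ℝ)+1+(k+1) - j)⁻¹ := by
      rw [Finset.sum_range_succ, Nat.choose_succ_self]
      simp
    have h1 : (∑ j ∈ Finset.range (n+2),
        (-1:ℝ)^(n+1+j) * ((n+1).choose j) * ((n:ℝ)+1+1+k - j)⁻¹)
        = (∑ j ∈ Finset.range (n+1), (-1:ℝ)^(n+j) * (n.choose j) * ((n:ℝ)+1+k - j)⁻¹)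
        - (∑ j ∈ Finset.range (n+2), (-1:ℝ)^(n+j) * (n.choose j) * ((n:ℝ)+1+(k+1) - j)⁻¹) := by
      rw [Finset.sum_range_succ' _ (n+1),
        Finset.sum_range_succ' (fun j => (-1:ℝ)^(n+j) * (n.choose j) * ((n:ℝ)+1+(k+1) - j)⁻¹) (n+1)]
      have hterm : ∀ j ∈ Finset.range (n+1),
          (-1:ℝ)^(n+1+(j+1)) * ((n+1).choose (j+1)) * ((n:ℝ)+1+1+k - ((j+1:ℕ):ℝ))⁻¹
          = (-1:ℝ)^(n+j) * (n.choose j) * ((n:ℝ)+1+k - j)⁻¹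
            - (-1:ℝ)^(n+(j+1)) * (n.choose (j+1)) * ((n:ℝ)+1+(k+1) - ((j+1:ℕ):ℝ))⁻¹ := by
        intro j hj
        rw [Nat.choose_succ_succ]
        push_cast
        have e1 : ((n:ℝ)+1+1+k - (j+1)) = ((n:ℝ)+1+k-j) := by ring
        have e2 : ((n:ℝ)+1+(k+1) - (j+1)) = ((n:ℝ)+1+k-j) := by ring
        rw [e1, e2]
        ring
      rw [Finset.sum_congr rfl hterm, Finset.sum_sub_distrib]
      simp only [Nat.choose_zero_right, Nat.add_zero, Nat.cast_one, Nat.cast_zero]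
      push_cast
      ring
    have ih1 := ih (k+1)
    push_cast at ih1
    push_cast
    rw [h1, h2, ih k, ih1]
    have e3 : n+1+(k+1) = (n+1+k)+1 := by omega
    have e4 : n+1+1+k = (n+1+k)+1 := by omega
    rw [e3, e4, Nat.factorial_succ (n+1+k), Nat.factorial_succ k, Nat.factorial_succ n]
    have h5 : (0:ℝ) < ((n+1+k)! : ℝ) := by positivity
    push_cast
    field_simp
    ring

/-- The coefficients of the power series of `(-1)^(n+1) (1-z)^n log(1-z)`. -/
noncomputable def cco (n : ℕ) : ℕ → ℂ := fun m =>
  ∑ j ∈ Finset.range (n+1),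
    (-1:ℂ)^(n+j) * (n.choose j) * (if j < m then ((m:ℂ) - j)⁻¹ else 0)

lemma cco_norm (n m : ℕ) : ‖cco n m‖ ≤ 2^n := by
  calc ‖cco n m‖ ≤ ∑ j ∈ Finset.range (n+1),
      ‖(-1:ℂ)^(n+j) * (n.choose j) * (if j < m then ((m:ℂ) - j)⁻¹ else 0)‖ :=
        norm_sum_le _ _
    _ ≤ ∑ j ∈ Finset.range (n+1), (n.choose j : ℝ) := by
        refine Finset.sum_le_sum fun j hj => ?_
        rw [norm_mul, norm_mul, norm_pow, norm_neg, norm_one, one_pow, one_mul,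
          Complex.norm_natCast]
        have ht : ‖(if j < m then ((m:ℂ) - j)⁻¹ else 0)‖ ≤ 1 := by
          split
          · rename_i hjm
            rw [show ((m:ℂ) - j) = ((m - j : ℕ) : ℂ) by
              push_cast [Nat.cast_sub hjm.le]; ring]
            rw [norm_inv, Complex.norm_natCast]
            have h1 : (1:ℝ) ≤ ((m - j : ℕ) : ℝ) := by
              have : 1 ≤ m - j := by omega
              exact_mod_cast this
            exact inv_le_one_of_one_le₀ h1
          · simp
        calc (n.choose j : ℝ) * ‖_‖ ≤ (n.choose j : ℝ) * 1 := by
              gcongr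
          _ = _ := mul_one _
    _ = 2^n := by
        rw [← Nat.cast_sum]
        norm_cast
        exact Nat.sum_range_choose n

lemma cco_hasSum (n : ℕ) {y : ℂ} (hy : ‖y‖ < 1) :
    HasSum (fun m => cco n m * y ^ m)
      ((-1:ℂ)^(n+1) * (1 - y)^n * Complex.log (1 - y)) := by
  have L : HasSum (fun k : ℕ => -(y^k / k)) (Complex.log (1 - y)) := by
    simpa using (Complex.hasSum_taylorSeries_neg_log hy).neg
  have hjsum : ∀ j ∈ Finset.range (n+1),
      HasSum (fun m => (-1:ℂ)^(n+j) * (n.choose j) *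
          (if j < m then ((m:ℂ) - j)⁻¹ else 0) * y^m)
        ((-1:ℂ)^(n+j+1) * (n.choose j) * y^j * Complex.log (1 - y)) := by
    intro j _
    have hL := L.mul_left ((-1:ℂ)^(n+j+1) * (n.choose j) * y^j)
    have heq : (fun k : ℕ => (-1:ℂ)^(n+j+1) * (n.choose j) * y^j * -(y^k/k))
        = fun k : ℕ => (-1:ℂ)^(n+j) * (n.choose j) *
            (if j < k + j then (((k + j : ℕ):ℂ) - j)⁻¹ else 0) * y^(k+j) := by
      funext k
      rcases k with _ | k
      · simp
      · rw [if_pos (by omega)]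
        push_cast
        rw [pow_succ]
        ring_nf
    rw [heq] at hL
    have := (hasSum_nat_add_iff (f := fun m => (-1:ℂ)^(n+j) * (n.choose j) *
        (if j < m then ((m:ℂ) - j)⁻¹ else 0) * y^m) j).mp hL
    have hz : ∑ i ∈ Finset.range j, (-1:ℂ)^(n+j) * (n.choose j) *
        (if j < i then ((i:ℂ) - j)⁻¹ else 0) * y^i = 0 := by
      refine Finset.sum_eq_zero fun i hi => ?_
      rw [Finset.mem_range] at hi
      rw [if_neg (by omega)]
      ring
    rwa [hz, add_zero] at this
  have hsum_all := hasSum_sum hjsum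
  have hfun : (fun m => ∑ j ∈ Finset.range (n+1), (-1:ℂ)^(n+j) * (n.choose j) *
      (if j < m then ((m:ℂ) - j)⁻¹ else 0) * y^m) = fun m => cco n m * y^m := by
    funext m
    rw [cco, Finset.sum_mul]
  have hval : ∑ j ∈ Finset.range (n+1),
      (-1:ℂ)^(n+j+1) * (n.choose j) * y^j * Complex.log (1 - y)
      = (-1:ℂ)^(n+1) * (1 - y)^n * Complex.log (1 - y) := by
    have hbin : (1 - y)^n = ∑ j ∈ Finset.range (n+1),
        (-y)^j * (1:ℂ)^(n-j) * (n.choose j) := by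
      rw [show (1:ℂ) - y = -y + 1 by ring, add_pow]
    rw [hbin, Finset.mul_sum, Finset.sum_mul]
    refine Finset.sum_congr rfl fun j _ => ?_
    rw [show n+j+1 = (n+1)+j by omega, pow_add, neg_pow, one_pow]
    ring
  rw [hfun, hval] at hsum_all
  exact hsum_all

/-- For every integer `n ≥ 0`, the function `u_n(z) = (-1)^(n+1) (1-z)^n log(1-z)` has a
power series expansion converging on the unit disk, whose coefficients `u_{n,m}` are
(real and) positive for all `m > n`. -/
theorem stmt_0 (n : ℕ) :
    ∃ p : FormalMultilinearSeries ℂ ℂ ℂ,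
      HasFPowerSeriesOnBall
        (fun z : ℂ => (-1 : ℂ) ^ (n + 1) * (1 - z) ^ n * Complex.log (1 - z)) p 0 1 ∧
      ∀ m : ℕ, n < m → (p.coeff m).im = 0 ∧ 0 < (p.coeff m).re := by
  refine ⟨FormalMultilinearSeries.ofScalars ℂ (cco n), ⟨?_, one_pos, ?_⟩, ?_⟩
  · -- radius
    rw [show (1 : ENNReal) = ((1 : NNReal) : ENNReal) by norm_num]
    refine FormalMultilinearSeries.le_radius_of_bound _ (2^n) fun m => ?_
    rw [FormalMultilinearSeries.ofScalars_norm]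
    simpa using cco_norm n m
  · -- sum
    intro y hy
    have hy' : ‖y‖ < 1 := by
      rw [mem_emetric_ball_zero_iff] at hy
      simpa [← NNReal.coe_lt_coe, ← ENNReal.coe_one, ENNReal.coe_lt_coe, coe_nnnorm] using hy
    have h := cco_hasSum n hy'
    have hfe : (fun m => FormalMultilinearSeries.ofScalars ℂ (cco n) m fun _ => y)
        = fun m => cco n m * y ^ m := by
      funext m
      rw [FormalMultilinearSeries.ofScalars_apply_eq, smul_eq_mul]
    rw [zero_add, hfe]
    exact h
  · -- coefficients
    intro m hm
    obtain ⟨k, rfl⟩ : ∃ k, m = n + 1 + k := ⟨m - (n+1), by omega⟩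
    have hcoeff : (FormalMultilinearSeries.ofScalars ℂ (cco n)).coeff (n+1+k)
        = cco n (n+1+k) := by
      show FormalMultilinearSeries.ofScalars ℂ (cco n) (n+1+k) (fun _ => 1) = _
      rw [FormalMultilinearSeries.ofScalars_apply_eq, one_pow, smul_eq_mul, mul_one]
    have hreal : cco n (n+1+k) = ((∑ j ∈ Finset.range (n+1),
        (-1:ℝ)^(n+j) * (n.choose j) * ((n:ℝ)+1+k - j)⁻¹ : ℝ) : ℂ) := by
      rw [cco, Complex.ofReal_sum]
      refine Finset.sum_congr rfl fun j hj => ?_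
      rw [Finset.mem_range] at hj
      rw [if_pos (by omega : j < n+1+k)]
      push_cast
      ring_nf
    rw [hcoeff, hreal, stmt0_auxS n k]
    constructor
    · simp
    · rw [Complex.ofReal_re]
      positivity
end

section
/- Let N ≥ 0 be an integer, d ≥ 2, and let φ be a continuous function on the unit sphere S^{d-1} ⊂ ℝ^d such that ∫_{S^{d-1}} (u·ξ)^N φ(ξ) dξ = 0 for every u ∈ ℝ^d. Then ∫_{S^{d-1}} p(ξ) φ(ξ) dξ = 0 for every homogeneous polynomial p of degree N on ℝ^d. -/
open MeasureTheory Finset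

lemma neg_one_pow_sub (a b : ℕ) (h : b ≤ a) : (-1 : ℝ) ^ (a - b) = (-1) ^ a * (-1) ^ b := by
  have : ((-1 : ℝ) ^ (a - b)) * ((-1) ^ b * (-1) ^ b) = (-1) ^ a * (-1) ^ b := by
    rw [← mul_assoc, ← pow_add, Nat.sub_add_cancel h]
  simpa [← pow_add, ← two_mul, pow_mul] using this

lemma sum_powerset_real {α : Type*} [DecidableEq α] (A : Finset α) :
    ∑ S ∈ A.powerset, (-1 : ℝ) ^ S.card = if A = ∅ then 1 else 0 := by
  have := Finset.sum_powerset_neg_one_pow_card (x := A)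
  have := congrArg (fun z : ℤ => (z : ℝ)) this
  push_cast at this
  split_ifs with hA <;> simp_all

lemma polar_sum (N : ℕ) (y : Fin N → ℝ) :
    ∑ S : Finset (Fin N), (-1 : ℝ) ^ (N - S.card) * (∑ j ∈ S, y j) ^ N
      = (N.factorial : ℝ) * ∏ j, y j := by
  classical
  calc
    ∑ S : Finset (Fin N), (-1 : ℝ) ^ (N - S.card) * (∑ j ∈ S, y j) ^ N
        = ∑ S : Finset (Fin N), ∑ g : Fin N → Fin N,
            (if ∀ k, g k ∈ S then (-1 : ℝ) ^ (N - S.card) * ∏ k, y (g k) else 0) := by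
      refine Finset.sum_congr rfl fun S _ => ?_
      rw [Finset.sum_pow' S y N, Finset.mul_sum]
      rw [← Finset.sum_filter]
      refine Finset.sum_congr ?_ fun g _ => rfl
      ext g
      simp [Fintype.mem_piFinset]
    _ = ∑ g : Fin N → Fin N, (∏ k, y (g k)) *
          ∑ S ∈ Finset.univ.filter (fun S : Finset (Fin N) => ∀ k, g k ∈ S),
            (-1 : ℝ) ^ (N - S.card) := by
      rw [Finset.sum_comm]
      refine Finset.sum_congr rfl fun g _ => ?_
      rw [Finset.mul_sum, Finset.sum_filter]
      exact Finset.sum_congr rfl fun S _ => by split_ifs <;> ring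
    _ = ∑ g : Fin N → Fin N, (∏ k, y (g k)) *
          (if Function.Surjective g then 1 else 0) := by
      refine Finset.sum_congr rfl fun g _ => ?_
      congr 1
      have himg : ∀ S : Finset (Fin N), (∀ k, g k ∈ S) ↔ Finset.image g Finset.univ ⊆ S := by
        intro S; simp [Finset.image_subset_iff]
      calc
        ∑ S ∈ Finset.univ.filter (fun S : Finset (Fin N) => ∀ k, g k ∈ S),
            (-1 : ℝ) ^ (N - S.card)
            = ∑ R ∈ (Finset.image g Finset.univ)ᶜ.powerset, (-1 : ℝ) ^ ((Finset.image g Finset.univ)ᶜ.card - R.card) := by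
          set T := Finset.image g Finset.univ with hT
          refine Finset.sum_nbij' (fun S => S \ T) (fun R => R ∪ T) ?_ ?_ ?_ ?_ ?_
          · intro S hS
            simp only [Finset.mem_filter, himg] at hS
            rw [Finset.mem_powerset]
            intro x hx
            rw [Finset.mem_compl]
            exact fun hxT => ((Finset.mem_sdiff.1 hx).2 hxT)
          · intro R hR
            simp only [Finset.mem_powerset] at hR
            simp [Finset.mem_filter, himg, Finset.subset_union_right]
          · intro S hS
            simp only [Finset.mem_filter, himg] at hS
            exact Finset.sdiff_union_of_subset hS.2
          · intro R hR
            simp only [Finset.mem_powerset] at hR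
            refine Finset.union_sdiff_cancel_right ?_
            exact Disjoint.mono_left hR (disjoint_compl_left)
          · intro S hS
            simp only [Finset.mem_filter, himg] at hS
            show (-1 : ℝ) ^ (N - S.card) = (-1 : ℝ) ^ (Tᶜ.card - (S \ T).card)
            congr 1
            have h1 : (S \ T).card = S.card - T.card := Finset.card_sdiff_of_subset hS.2
            have h2 : T.card ≤ S.card := Finset.card_le_card hS.2
            have h3 : S.card ≤ N := by simpa using Finset.card_le_card (Finset.subset_univ S)
            have h4 : Tᶜ.card = N - T.card := by
              simp [Finset.card_compl]
            omega
        _ = (if Function.Surjective g then 1 else 0) := by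
          set A := (Finset.image g Finset.univ)ᶜ with hA
          have : ∀ R ∈ A.powerset, (-1 : ℝ) ^ (A.card - R.card) = (-1) ^ A.card * (-1) ^ R.card := by
            intro R hR
            exact neg_one_pow_sub _ _ (Finset.card_le_card (Finset.mem_powerset.1 hR))
          rw [Finset.sum_congr rfl this, ← Finset.mul_sum, sum_powerset_real]
          have hsurj0 : Function.Surjective g ↔ A = ∅ := by
            rw [hA, Finset.compl_eq_empty_iff]
            constructor
            · intro hg; ext x; simpa using hg x
            · intro hu x
              have : x ∈ Finset.image g Finset.univ := by rw [hu]; simp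
              simpa using this
          simp only [hsurj0]
          split_ifs with h1
          · simp [h1]
          · simp
    _ = (N.factorial : ℝ) * ∏ j, y j := by
      have step : ∀ g : Fin N → Fin N, (∏ k, y (g k)) * (if Function.Surjective g then (1:ℝ) else 0)
          = if Function.Surjective g then ∏ k, y (g k) else 0 := by
        intro g; split_ifs <;> ring
      rw [Finset.sum_congr rfl fun g _ => step g, ← Finset.sum_filter]
      have hbij : ∀ g ∈ Finset.univ.filter (fun g : Fin N → Fin N => Function.Surjective g),
          (∏ k, y (g k)) = ∏ j, y j := by
        intro g hg
        have hg' : Function.Bijective g :=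
          Finite.surjective_iff_bijective.1 (Finset.mem_filter.1 hg).2
        exact Fintype.prod_bijective g hg' _ _ (fun k => rfl)
      rw [Finset.sum_congr rfl hbij, Finset.sum_const, nsmul_eq_mul]
      congr 1
      have e : Equiv.Perm (Fin N) ≃ {g : Fin N → Fin N // Function.Surjective g} :=
        { toFun := fun e => ⟨e, e.surjective⟩
          invFun := fun g => Equiv.ofBijective g (Finite.surjective_iff_bijective.1 g.2)
          left_inv := fun e => Equiv.ext fun x => rfl
          right_inv := fun g => Subtype.ext rfl }
      have hcard : (Finset.univ.filter (fun g : Fin N → Fin N => Function.Surjective g)).card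
          = N.factorial := by
        rw [← Fintype.card_subtype, ← Fintype.card_congr e, Fintype.card_perm, Fintype.card_fin]
      rw [hcard]

lemma exists_fun_prod {d N : ℕ} (s : Fin d →₀ ℕ) (hs : Finsupp.degree s = N) :
    ∃ f : Fin N → Fin d, ∀ x : Fin d → ℝ,
      (∏ j, x (f j)) = s.prod fun i n => x i ^ n := by
  classical
  set l := s.toMultiset.toList with hl
  have hlen : l.length = N := by
    rw [hl, Multiset.length_toList, Finsupp.card_toMultiset, ← hs]
    rfl
  refine ⟨fun j => l.get (Fin.cast hlen.symm j), fun x => ?_⟩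
  have h1 : (∏ j : Fin N, x (l.get (Fin.cast hlen.symm j)))
      = ∏ j : Fin l.length, x (l.get j) :=
    Fintype.prod_equiv (finCongr hlen.symm) _ _ (fun j => rfl)
  have h2 : (l.map x).prod = ∏ j : Fin l.length, x (l.get j) := by
    conv_lhs => rw [← List.ofFn_get l]
    rw [List.map_ofFn, List.prod_ofFn]
    rfl
  have h3 : (l.map x).prod = (s.toMultiset.map x).prod := by
    rw [hl]
    rw [← Multiset.prod_coe, ← Multiset.map_coe, Multiset.coe_toList]
  rw [h1, ← h2, h3, Finsupp.toMultiset_map, Finsupp.prod_toMultiset]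
  exact Finsupp.prod_mapDomain_index (fun r => pow_zero r)
    (fun r n m => pow_add r n m)

/-- If a continuous function `φ` on the unit sphere `S^{d-1} ⊂ ℝ^d` satisfies
`∫ (u·ξ)^N φ(ξ) dξ = 0` for every `u ∈ ℝ^d`, then `∫ p(ξ) φ(ξ) dξ = 0` for every
homogeneous polynomial `p` of degree `N` on `ℝ^d`. -/
theorem stmt_4 (d N : ℕ) (hd : 2 ≤ d)
    (φ : Metric.sphere (0 : EuclideanSpace ℝ (Fin d)) 1 → ℂ) (hφ : Continuous φ)
    (h : ∀ u : EuclideanSpace ℝ (Fin d),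
      (∫ ξ : Metric.sphere (0 : EuclideanSpace ℝ (Fin d)) 1,
        (((inner ℝ u (ξ : EuclideanSpace ℝ (Fin d)) : ℝ) : ℂ)) ^ N * φ ξ
        ∂(Measure.toSphere (volume : Measure (EuclideanSpace ℝ (Fin d))))) = 0) :
    ∀ p : MvPolynomial (Fin d) ℝ, p.IsHomogeneous N →
      (∫ ξ : Metric.sphere (0 : EuclideanSpace ℝ (Fin d)) 1,
        ((MvPolynomial.eval (fun i => (ξ : EuclideanSpace ℝ (Fin d)) i) p : ℝ) : ℂ) * φ ξ
        ∂(Measure.toSphere (volume : Measure (EuclideanSpace ℝ (Fin d))))) = 0 := by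
  classical
  intro p hp
  set μ : Measure (Metric.sphere (0 : EuclideanSpace ℝ (Fin d)) 1) :=
    Measure.toSphere (volume : Measure (EuclideanSpace ℝ (Fin d))) with hμ
  have hcoord : Continuous fun ξ : Metric.sphere (0 : EuclideanSpace ℝ (Fin d)) 1 =>
      (fun i => (ξ : EuclideanSpace ℝ (Fin d)) i : Fin d → ℝ) :=
    (PiLp.continuous_ofLp 2 fun _ : Fin d => ℝ).comp continuous_subtype_val
  have hint : ∀ q : MvPolynomial (Fin d) ℝ,
      Integrable (fun ξ : Metric.sphere (0 : EuclideanSpace ℝ (Fin d)) 1 =>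
        ((MvPolynomial.eval (fun i => (ξ : EuclideanSpace ℝ (Fin d)) i) q : ℝ) : ℂ) * φ ξ) μ := by
    intro q
    refine Continuous.integrable_of_hasCompactSupport ?_ ?_
    · exact (Complex.continuous_ofReal.comp (q.continuous_eval.comp hcoord)).mul hφ
    · exact IsClosed.isCompact (isClosed_tsupport _)
  -- the monomial case
  have hmono : ∀ s : Fin d →₀ ℕ, Finsupp.degree s = N →
      (∫ ξ : Metric.sphere (0 : EuclideanSpace ℝ (Fin d)) 1,
        ((MvPolynomial.eval (fun i => (ξ : EuclideanSpace ℝ (Fin d)) i)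
            (MvPolynomial.monomial s (1 : ℝ)) : ℝ) : ℂ) * φ ξ ∂μ) = 0 := by
    intro s hs
    obtain ⟨f, hf⟩ := exists_fun_prod s hs
    set u : Finset (Fin N) → EuclideanSpace ℝ (Fin d) :=
      fun S => WithLp.toLp 2 (fun i => ∑ j ∈ S, if f j = i then (1 : ℝ) else 0) with hu
    have hinner : ∀ (S : Finset (Fin N)) (ξ : EuclideanSpace ℝ (Fin d)),
        (inner ℝ (u S) ξ : ℝ) = ∑ j ∈ S, ξ (f j) := by
      intro S ξ
      rw [PiLp.inner_apply]
      simp only [RCLike.inner_apply, conj_trivial]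
      simp only [mul_comm (ξ _)]
      calc ∑ i, (u S i) * ξ i
          = ∑ i, ∑ j ∈ S, (if f j = i then ξ i else 0) := by
            refine Finset.sum_congr rfl fun i _ => ?_
            rw [hu]
            simp only [PiLp.toLp_apply]
            rw [Finset.sum_mul]
            exact Finset.sum_congr rfl fun j _ => by split_ifs <;> ring
        _ = ∑ j ∈ S, ∑ i, (if f j = i then ξ i else 0) := Finset.sum_comm
        _ = ∑ j ∈ S, ξ (f j) := Finset.sum_congr rfl fun j _ => by simp
    -- pointwise identity
    have hpt : ∀ ξ : Metric.sphere (0 : EuclideanSpace ℝ (Fin d)) 1,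
        ((MvPolynomial.eval (fun i => (ξ : EuclideanSpace ℝ (Fin d)) i)
            (MvPolynomial.monomial s (1 : ℝ)) : ℝ) : ℂ) * φ ξ
        = ((N.factorial : ℂ))⁻¹ * ∑ S : Finset (Fin N),
            ((-1 : ℂ)) ^ (N - S.card) *
              ((((inner ℝ (u S) (ξ : EuclideanSpace ℝ (Fin d)) : ℝ)) : ℂ) ^ N * φ ξ) := by
      intro ξ
      have hreal : (MvPolynomial.eval (fun i => (ξ : EuclideanSpace ℝ (Fin d)) i)
          (MvPolynomial.monomial s (1 : ℝ)) : ℝ)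
          = (N.factorial : ℝ)⁻¹ * ∑ S : Finset (Fin N),
              (-1 : ℝ) ^ (N - S.card) *
                ((inner ℝ (u S) (ξ : EuclideanSpace ℝ (Fin d)) : ℝ)) ^ N := by
        have e1 : (MvPolynomial.eval (fun i => (ξ : EuclideanSpace ℝ (Fin d)) i)
            (MvPolynomial.monomial s (1 : ℝ)) : ℝ)
            = ∏ j, (fun i => (ξ : EuclideanSpace ℝ (Fin d)) i) (f j) := by
          rw [MvPolynomial.eval_monomial, one_mul, hf]
        have e2 := polar_sum N (fun j => (ξ : EuclideanSpace ℝ (Fin d)) (f j))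
        simp only [hinner]
        rw [e1]
        field_simp
        rw [e2]
        ring
      rw [hreal]
      push_cast
      simp only [Finset.mul_sum, Finset.sum_mul]
      exact Finset.sum_congr rfl fun S _ => by ring
    -- integrability of each summand
    have hintS : ∀ S : Finset (Fin N),
        Integrable (fun ξ : Metric.sphere (0 : EuclideanSpace ℝ (Fin d)) 1 =>
          ((-1 : ℂ)) ^ (N - S.card) *
            ((((inner ℝ (u S) (ξ : EuclideanSpace ℝ (Fin d)) : ℝ)) : ℂ) ^ N * φ ξ)) μ := by
      intro S
      refine Continuous.integrable_of_hasCompactSupport ?_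
        (IsClosed.isCompact (isClosed_tsupport _))
      refine continuous_const.mul (Continuous.mul ?_ hφ)
      refine Continuous.pow ?_ N
      exact Complex.continuous_ofReal.comp
        ((Continuous.inner continuous_const continuous_subtype_val))
    calc (∫ ξ : Metric.sphere (0 : EuclideanSpace ℝ (Fin d)) 1,
          ((MvPolynomial.eval (fun i => (ξ : EuclideanSpace ℝ (Fin d)) i)
              (MvPolynomial.monomial s (1 : ℝ)) : ℝ) : ℂ) * φ ξ ∂μ)
        = ∫ ξ, ((N.factorial : ℂ))⁻¹ * ∑ S : Finset (Fin N),
            ((-1 : ℂ)) ^ (N - S.card) *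
              ((((inner ℝ (u S) (ξ : EuclideanSpace ℝ (Fin d)) : ℝ)) : ℂ) ^ N * φ ξ) ∂μ := by
          exact integral_congr_ae (Filter.Eventually.of_forall hpt)
      _ = ((N.factorial : ℂ))⁻¹ * ∑ S : Finset (Fin N), ∫ ξ,
            ((-1 : ℂ)) ^ (N - S.card) *
              ((((inner ℝ (u S) (ξ : EuclideanSpace ℝ (Fin d)) : ℝ)) : ℂ) ^ N * φ ξ) ∂μ := by
          rw [integral_const_mul, integral_finset_sum _ (fun S _ => hintS S)]
      _ = 0 := by
          rw [Finset.sum_congr rfl (fun S _ => ?_), Finset.sum_const, smul_zero, mul_zero]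
          rw [integral_const_mul, h (u S), mul_zero]
  -- reduce to monomials
  have hsplit : ∀ x : Fin d → ℝ, MvPolynomial.eval x p
      = ∑ s ∈ p.support, (MvPolynomial.coeff s p) *
          MvPolynomial.eval x (MvPolynomial.monomial s (1 : ℝ)) := by
    intro x
    conv_lhs => rw [← MvPolynomial.support_sum_monomial_coeff p]
    rw [map_sum]
    refine Finset.sum_congr rfl fun s _ => ?_
    rw [MvPolynomial.eval_monomial, MvPolynomial.eval_monomial]
    ring
  calc (∫ ξ : Metric.sphere (0 : EuclideanSpace ℝ (Fin d)) 1,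
        ((MvPolynomial.eval (fun i => (ξ : EuclideanSpace ℝ (Fin d)) i) p : ℝ) : ℂ) * φ ξ ∂μ)
      = ∫ ξ, ∑ s ∈ p.support, ((MvPolynomial.coeff s p : ℝ) : ℂ) *
          (((MvPolynomial.eval (fun i => (ξ : EuclideanSpace ℝ (Fin d)) i)
              (MvPolynomial.monomial s (1 : ℝ)) : ℝ) : ℂ) * φ ξ) ∂μ := by
        refine integral_congr_ae (Filter.Eventually.of_forall fun ξ => ?_)
        beta_reduce
        rw [hsplit]
        push_cast
        rw [Finset.sum_mul]
        exact Finset.sum_congr rfl fun s _ => by ring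
    _ = ∑ s ∈ p.support, ((MvPolynomial.coeff s p : ℝ) : ℂ) *
          ∫ ξ, ((MvPolynomial.eval (fun i => (ξ : EuclideanSpace ℝ (Fin d)) i)
              (MvPolynomial.monomial s (1 : ℝ)) : ℝ) : ℂ) * φ ξ ∂μ := by
        rw [integral_finset_sum _ (fun s _ => (hint _).const_mul _)]
        exact Finset.sum_congr rfl fun s _ => integral_const_mul _ _
    _ = 0 := by
        refine Finset.sum_eq_zero fun s hs => ?_
        rw [hmono s ?_, mul_zero]
        have := hp (MvPolynomial.mem_support_iff.1 hs)
        rw [Finsupp.degree_eq_weight_one]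
        exact this
end

section
/- Let μ ∈ ℂ not be a non-negative integer, and let φ be a continuous function on the unit sphere S^{d-1} ⊂ ℝ^d such that ∫_{S^{d-1}} (1 - ∑_{j=1}^d u_j ξ_j)^μ φ(ξ) dξ = 0 for all u = (u_1,…,u_d) ∈ ℂ^d with ∑_j |u_j|² < 1. Then φ = 0. -/
open MeasureTheory
open scoped Pointwise

noncomputable section StmtHelpers

variable {d : ℕ}

abbrev ESp (d : ℕ) := EuclideanSpace ℝ (Fin d)
abbrev Sph (d : ℕ) := Metric.sphere (0 : ESp d) 1
noncomputable abbrev sphM (d : ℕ) : Measure (Sph d) :=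
  Measure.toSphere (volume : Measure (ESp d))

lemma coord_abs_le (ξ : Sph d) (j : Fin d) : |(ξ : ESp d) j| ≤ 1 := by
  have h1 : ‖(ξ : ESp d)‖ = 1 := by simpa using mem_sphere_zero_iff_norm.mp ξ.2
  set x := (ξ : ESp d)
  calc |x j| = Real.sqrt (|x j| ^ 2) := by rw [Real.sqrt_sq (abs_nonneg _)]
    _ ≤ Real.sqrt (∑ i, |x i| ^ 2) := by
        apply Real.sqrt_le_sqrt
        exact Finset.single_le_sum (f := fun i => |x i| ^ 2)
          (fun i _ => by positivity) (Finset.mem_univ j)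
    _ = ‖x‖ := by rw [EuclideanSpace.norm_eq]; norm_num
    _ = 1 := h1

lemma coord_cont (j : Fin d) : Continuous fun ξ : Sph d => (((ξ : ESp d) j : ℝ) : ℂ) :=
  Complex.continuous_ofReal.comp ((continuous_apply j).comp (Continuous.comp (PiLp.continuous_ofLp 2 _) continuous_subtype_val))

lemma cont_int {B : Type*} [NormedAddCommGroup B] (f : Sph d → B) (hf : Continuous f) :
    Integrable f (sphM d) :=
  hf.integrable_of_hasCompactSupport (HasCompactSupport.of_compactSpace f)

/-- Uniform bound for `z ^ c` on the annulus `1/2 ≤ |z| ≤ 3/2`. -/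
lemma cpow_bound (c : ℂ) : ∃ B : ℝ, 0 ≤ B ∧ ∀ z : ℂ,
    1/2 ≤ ‖z‖ → ‖z‖ ≤ 3/2 → ‖z ^ c‖ ≤ B := by
  refine ⟨(2 : ℝ) ^ |c.re| * Real.exp (|c.im| * Real.pi), by positivity, fun z h1 h2 => ?_⟩
  have hz : z ≠ 0 := by
    intro h; rw [h] at h1; simp at h1; linarith
  rw [Complex.norm_cpow_of_ne_zero hz]
  have hb : ‖z‖ ^ c.re ≤ (2 : ℝ) ^ |c.re| := by
    rcases le_or_gt 0 c.re with hre | hre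
    · rw [abs_of_nonneg hre]
      calc ‖z‖ ^ c.re ≤ (2 : ℝ) ^ c.re :=
            Real.rpow_le_rpow (norm_nonneg z) (by linarith) hre
        _ ≤ _ := le_refl _
    · rw [abs_of_neg hre]
      calc ‖z‖ ^ c.re ≤ (1/2 : ℝ) ^ c.re :=
            Real.rpow_le_rpow_of_nonpos (by norm_num) h1 hre.le
        _ = (2 : ℝ) ^ (-c.re) := by
            rw [one_div, Real.inv_rpow (by norm_num), ← Real.rpow_neg (by norm_num)]
  have he : (Real.exp (Complex.arg z * c.im))⁻¹ ≤ Real.exp (|c.im| * Real.pi) := by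
    rw [← Real.exp_neg]
    apply Real.exp_le_exp.2
    have := Complex.abs_arg_le_pi z
    calc -(Complex.arg z * c.im) ≤ |Complex.arg z * c.im| := neg_le_abs _
      _ = |Complex.arg z| * |c.im| := abs_mul _ _
      _ ≤ Real.pi * |c.im| := by
          apply mul_le_mul_of_nonneg_right this (abs_nonneg _)
      _ = |c.im| * Real.pi := mul_comm _ _
  calc ‖z‖ ^ c.re / Real.exp (Complex.arg z * c.im)
      = ‖z‖ ^ c.re * (Real.exp (Complex.arg z * c.im))⁻¹ := div_eq_mul_inv _ _
    _ ≤ (2 : ℝ) ^ |c.re| * Real.exp (|c.im| * Real.pi) := by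
        exact mul_le_mul hb he (by positivity) (by positivity)
    _ = _ := rfl

section Main

variable (μ : ℂ) (φ : Sph d → ℂ)

set_option maxHeartbeats 1000000 in
/-- Step 1: all moments against powers of a complex linear form vanish. -/
lemma moment_one (hμ : ∀ k : ℕ, μ ≠ (k : ℂ)) (hφ : Continuous φ)
    (h : ∀ u : Fin d → ℂ, (∑ j, ‖u j‖ ^ 2) < 1 →
      (∫ ξ : Sph d, (1 - ∑ j, u j * (((ξ : ESp d) j : ℝ) : ℂ)) ^ μ * φ ξ ∂(sphM d)) = 0)
    (v : Fin d → ℂ) (n : ℕ) :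
    ∫ ξ : Sph d, (∑ j, v j * (((ξ : ESp d) j : ℝ) : ℂ)) ^ n * φ ξ ∂(sphM d) = 0 := by
  classical
  set s : Sph d → ℂ := fun ξ => ∑ j, v j * (((ξ : ESp d) j : ℝ) : ℂ) with hs_def
  have hs_cont : Continuous s := by
    apply continuous_finset_sum
    intro j _
    exact continuous_const.mul (coord_cont j)
  set M : ℝ := ∑ j, ‖v j‖ with hM_def
  have hM0 : 0 ≤ M := Finset.sum_nonneg fun j _ => norm_nonneg _
  have hs_bd : ∀ ξ, ‖s ξ‖ ≤ M := by
    intro ξ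
    calc ‖s ξ‖ ≤ ∑ j, ‖v j * (((ξ : ESp d) j : ℝ) : ℂ)‖ :=
          norm_sum_le _ _
      _ ≤ ∑ j, ‖v j‖ := by
          apply Finset.sum_le_sum
          intro j _
          rw [norm_mul]
          calc ‖v j‖ * ‖(((ξ : ESp d) j : ℝ) : ℂ)‖
              ≤ ‖v j‖ * 1 := by
                apply mul_le_mul_of_nonneg_left _ (norm_nonneg _)
                rw [Complex.norm_real, Real.norm_eq_abs]
                exact coord_abs_le ξ j
            _ = ‖v j‖ := mul_one _
  set ε : ℝ := (2 * (M + 1))⁻¹ with hε_def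
  have hε_pos : 0 < ε := by positivity
  have hM1 : (M + 1) ≠ 0 := by positivity
  have hεM : ε * (M + 1) = 1/2 := by rw [hε_def]; field_simp
  have hts : ∀ t : ℂ, t ∈ Metric.ball (0:ℂ) ε → ∀ ξ, ‖t * s ξ‖ < 1/2 := by
    intro t ht ξ
    rw [Metric.mem_ball, dist_zero_right] at ht
    have habs : ‖t‖ < ε := ht
    rw [norm_mul]
    calc ‖t‖ * ‖s ξ‖ ≤ ‖t‖ * (M + 1) := by
          apply mul_le_mul_of_nonneg_left _ (norm_nonneg _)
          linarith [hs_bd ξ]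
      _ < ε * (M + 1) := mul_lt_mul_of_pos_right habs (by linarith)
      _ = 1/2 := hεM
  -- basic consequences for the base point 1 - t * s ξ
  have hbase : ∀ t : ℂ, t ∈ Metric.ball (0:ℂ) ε → ∀ ξ,
      1/2 ≤ ‖1 - t * s ξ‖ ∧ ‖1 - t * s ξ‖ ≤ 3/2 ∧
      (1 - t * s ξ) ∈ Complex.slitPlane := by
    intro t ht ξ
    have h1 := hts t ht ξ
    refine ⟨?_, ?_, ?_⟩
    · have h2 := norm_sub_norm_le (1 : ℂ) (t * s ξ)
      rw [norm_one] at h2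
      linarith
    · calc ‖1 - t * s ξ‖ = ‖1 + -(t * s ξ)‖ := by
            rw [sub_eq_add_neg]
        _ ≤ ‖1‖ + ‖-(t * s ξ)‖ := norm_add_le _ _
        _ = 1 + ‖t * s ξ‖ := by rw [norm_one, norm_neg]
        _ ≤ 1 + 1/2 := by linarith
        _ = 3/2 := by norm_num
    · apply Complex.mem_slitPlane_iff.2
      left
      have : (t * s ξ).re ≤ ‖t * s ξ‖ := Complex.re_le_norm _
      simp only [Complex.sub_re, Complex.one_re]
      linarith
  -- the iterated functions
  set Pd : ℕ → ℂ := fun n => ∏ k ∈ Finset.range n, (μ - k) with hPd_def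
  have hPd_ne : ∀ n, Pd n ≠ 0 := by
    intro n
    apply Finset.prod_ne_zero_iff.2
    intro k _
    exact sub_ne_zero.2 (hμ k)
  set G : ℕ → ℂ → ℂ := fun n t =>
    ∫ ξ : Sph d, Pd n * (-s ξ) ^ n * (1 - t * s ξ) ^ (μ - n) * φ ξ ∂(sphM d) with hG_def
  have key : ∀ n, ∀ t ∈ Metric.ball (0:ℂ) ε, G n t = 0 := by
    intro n
    induction n with
    | zero =>
      intro t ht
      have hsum : (∑ j, ‖t * v j‖ ^ 2) < 1 := by
        rw [Metric.mem_ball, dist_zero_right] at ht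
        have h1 : ∀ j, ‖t * v j‖ ^ 2 = ‖t‖ ^ 2 * ‖v j‖ ^ 2 := by
          intro j; rw [norm_mul, mul_pow]
        rw [Finset.sum_congr rfl fun j _ => h1 j, ← Finset.mul_sum]
        have h2 : (∑ j, ‖v j‖ ^ 2) ≤ M ^ 2 := by
          rw [hM_def]
          exact Finset.sum_sq_le_sq_sum_of_nonneg fun j _ => norm_nonneg _
        have h3 : ‖t‖ * M < 1/2 := by
          calc ‖t‖ * M ≤ ‖t‖ * (M+1) := by
                apply mul_le_mul_of_nonneg_left (by linarith) (norm_nonneg _)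
            _ < ε * (M+1) := by
                apply mul_lt_mul_of_pos_right ht (by linarith)
            _ = 1/2 := hεM
        calc ‖t‖ ^ 2 * ∑ j, ‖v j‖ ^ 2
            ≤ ‖t‖ ^ 2 * M ^ 2 := by
              apply mul_le_mul_of_nonneg_left h2 (by positivity)
          _ = (‖t‖ * M) ^ 2 := by ring
          _ < 1 := by nlinarith [norm_nonneg t, mul_nonneg (norm_nonneg t) hM0]
      have hh := h (fun j => t * v j) hsum
      simp only [hG_def, hPd_def, pow_zero, Nat.cast_zero, sub_zero, Finset.range_zero,
        Finset.prod_empty, one_mul, mul_one]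
      rw [← hh]
      apply integral_congr_ae
      apply Filter.Eventually.of_forall
      intro ξ
      have hts' : t * s ξ = ∑ j, (t * v j) * (((ξ : ESp d) j : ℝ) : ℂ) := by
        rw [hs_def]
        simp only []
        rw [Finset.mul_sum]
        exact Finset.sum_congr rfl fun j _ => by ring
      simp only [hts']
    | succ n ih =>
      intro t ht
      -- differentiate under the integral at t
      set ε' : ℝ := ε - ‖t‖ with hε'_def
      have hε'_pos : 0 < ε' := by
        rw [Metric.mem_ball, dist_zero_right] at ht
        have ht' : ‖t‖ < ε := ht
        simp only [hε'_def]; linarith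
      have hball : Metric.ball t ε' ⊆ Metric.ball (0:ℂ) ε := by
        intro x hx
        rw [Metric.mem_ball, dist_zero_right]
        rw [Metric.mem_ball] at hx
        calc ‖x‖ = ‖x - t + t‖ := by rw [sub_add_cancel]
          _ ≤ ‖x - t‖ + ‖t‖ := norm_add_le _ _
          _ < ε' + ‖t‖ := by
              refine add_lt_add_of_lt_of_le ?_ le_rfl
              rw [← Complex.dist_eq]
              exact hx
          _ = ε := by rw [hε'_def]; ring
      set F : ℂ → Sph d → ℂ := fun x ξ => Pd n * (-s ξ) ^ n * (1 - x * s ξ) ^ (μ - n) * φ ξ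
        with hF_def
      set F' : ℂ → Sph d → ℂ := fun x ξ =>
        Pd (n+1) * (-s ξ) ^ (n+1) * (1 - x * s ξ) ^ (μ - (n+1 : ℕ)) * φ ξ with hF'_def
      obtain ⟨B, hB0, hB⟩ := cpow_bound (μ - (n+1 : ℕ))
      have hcont : ∀ x ∈ Metric.ball (0:ℂ) ε, Continuous (F x) := by
        intro x hx
        apply Continuous.mul _ hφ
        apply Continuous.mul
        · exact continuous_const.mul ((hs_cont.neg).pow n)
        · apply Continuous.cpow (continuous_const.sub (continuous_const.mul hs_cont))
            continuous_const
          intro ξ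
          exact (hbase x hx ξ).2.2
      have hcont' : ∀ x ∈ Metric.ball (0:ℂ) ε, Continuous (F' x) := by
        intro x hx
        apply Continuous.mul _ hφ
        apply Continuous.mul
        · exact continuous_const.mul ((hs_cont.neg).pow (n+1))
        · apply Continuous.cpow (continuous_const.sub (continuous_const.mul hs_cont))
            continuous_const
          intro ξ
          exact (hbase x hx ξ).2.2
      -- bound for φ
      obtain ⟨C, hC⟩ : ∃ C : ℝ, ∀ ξ, ‖φ ξ‖ ≤ C := by
        obtain ⟨C, hC⟩ := (isCompact_range hφ.norm).bddAbove
        exact ⟨C, fun ξ => hC ⟨ξ, rfl⟩⟩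
      have hderiv := hasDerivAt_integral_of_dominated_loc_of_deriv_le
        (F := F) (F' := F') (μ := sphM d) (x₀ := t)
        (bound := fun ξ => ‖Pd (n+1)‖ * M ^ (n+1) * B * ‖φ ξ‖)
        (Metric.ball_mem_nhds t hε'_pos) ?_ ?_ ?_ ?_ ?_ ?_
      · -- use the derivative to conclude
        have hev : (fun x => ∫ ξ, F x ξ ∂(sphM d)) =ᶠ[nhds t] fun _ => (0:ℂ) := by
          apply Filter.eventuallyEq_of_mem (Metric.isOpen_ball.mem_nhds ht)
          intro x hx
          exact ih x hx
        have h0 : HasDerivAt (fun _ : ℂ => (0:ℂ)) (∫ ξ, F' t ξ ∂(sphM d)) t :=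
          hderiv.2.congr_of_eventuallyEq hev.symm
        have h00 := h0.unique (hasDerivAt_const t 0)
        simp only [hG_def]
        exact h00
      · -- a.e. strong measurability of F x for x near t
        apply Filter.eventually_of_mem (Metric.ball_mem_nhds t hε'_pos)
        intro x hx
        exact ((hcont x (hball hx)).aestronglyMeasurable)
      · exact cont_int _ (hcont t (hball (Metric.mem_ball_self hε'_pos)))
      · exact ((hcont' t (hball (Metric.mem_ball_self hε'_pos))).aestronglyMeasurable)
      · -- bound
        apply Filter.Eventually.of_forall
        intro ξ x hx
        have hx0 := hball hx
        obtain ⟨hb1, hb2, _⟩ := hbase x hx0 ξ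
        simp only [hF'_def]
        rw [norm_mul, norm_mul, norm_mul]
        have h1 : ‖(-s ξ) ^ (n+1)‖ ≤ M ^ (n+1) := by
          rw [norm_pow, norm_neg]
          exact pow_le_pow_left₀ (norm_nonneg _) (hs_bd ξ) _
        have h2 : ‖(1 - x * s ξ) ^ (μ - (n+1:ℕ))‖ ≤ B := hB _ hb1 hb2
        calc ‖Pd (n+1)‖ * ‖(-s ξ) ^ (n+1)‖ *
              ‖(1 - x * s ξ) ^ (μ - (n+1:ℕ))‖ * ‖φ ξ‖
            ≤ ‖Pd (n+1)‖ * M ^ (n+1) * B * ‖φ ξ‖ := by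
              apply mul_le_mul_of_nonneg_right _ (norm_nonneg _)
              apply mul_le_mul _ h2 (norm_nonneg _) (by positivity)
              exact mul_le_mul_of_nonneg_left h1 (norm_nonneg _)
          _ = _ := rfl
      · -- integrability of the bound
        apply Integrable.const_mul
        exact cont_int _ hφ.norm |>.congr (Filter.Eventually.of_forall fun ξ => rfl)
      · -- differentiability
        apply Filter.Eventually.of_forall
        intro ξ x hx
        have hx0 := hball hx
        obtain ⟨_, _, hslit⟩ := hbase x hx0 ξ
        have hinner : HasDerivAt (fun y : ℂ => 1 - y * s ξ) (-(s ξ)) x := by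
          simpa using ((hasDerivAt_mul_const (s ξ)).const_sub (1:ℂ))
        have hcp : HasDerivAt (fun y : ℂ => (1 - y * s ξ) ^ (μ - n))
            ((μ - n) * (1 - x * s ξ) ^ (μ - n - 1) * (-(s ξ))) x :=
          HasDerivAt.cpow_const hinner hslit
        have := (hcp.const_mul (Pd n * (-s ξ) ^ n)).mul_const (φ ξ)
        convert this using 1
        · rfl
        simp only [hF'_def, hPd_def]
        rw [Finset.prod_range_succ]
        have hexp : μ - ((n+1 : ℕ) : ℂ) = μ - n - 1 := by push_cast; ring
        rw [hexp]
        ring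
  -- evaluate at t = 0
  have h0 := key n 0 (Metric.mem_ball_self hε_pos)
  simp only [hG_def] at h0
  simp only [zero_mul, sub_zero] at h0
  have h1 : ∀ ξ : Sph d, Pd n * (-s ξ) ^ n * (1:ℂ) ^ (μ - n) * φ ξ
      = (Pd n * (-1)^n) * (s ξ ^ n * φ ξ) := by
    intro ξ
    rw [Complex.one_cpow]
    rw [neg_pow]
    ring
  rw [integral_congr_ae (Filter.Eventually.of_forall h1)] at h0
  rw [integral_const_mul] at h0
  rcases mul_eq_zero.1 h0 with h2 | h2
  · exact absurd h2 (mul_ne_zero (hPd_ne n) (pow_ne_zero n (by norm_num)))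
  · exact h2

set_option maxHeartbeats 1000000 in
/-- Step 2: all monomial moments vanish. -/
lemma moment_two (hμ : ∀ k : ℕ, μ ≠ (k : ℂ)) (hφ : Continuous φ)
    (h : ∀ u : Fin d → ℂ, (∑ j, ‖u j‖ ^ 2) < 1 →
      (∫ ξ : Sph d, (1 - ∑ j, u j * (((ξ : ESp d) j : ℝ) : ℂ)) ^ μ * φ ξ ∂(sphM d)) = 0)
    (k : Fin d → ℕ) :
    ∫ ξ : Sph d, (∏ j, (((ξ : ESp d) j : ℝ) : ℂ) ^ k j) * φ ξ ∂(sphM d) = 0 := by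
  classical
  set n := ∑ j, k j with hn_def
  set Mo : (Fin d → ℕ) → ℂ := fun m =>
    ∫ ξ : Sph d, (∏ j, (((ξ : ESp d) j : ℝ) : ℂ) ^ m j) * φ ξ ∂(sphM d) with hMo_def
  have hMo_int : ∀ m : Fin d → ℕ,
      Integrable (fun ξ : Sph d => (∏ j, (((ξ : ESp d) j : ℝ) : ℂ) ^ m j) * φ ξ) (sphM d) := by
    intro m
    apply cont_int
    exact (continuous_finset_prod _ fun j _ => (coord_cont j).pow (m j)).mul hφ
  set P : MvPolynomial (Fin d) ℂ :=
    ∑ m ∈ Finset.piAntidiag Finset.univ n,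
      MvPolynomial.monomial (Finsupp.equivFunOnFinite.symm m)
        ((Nat.multinomial Finset.univ m : ℂ) * Mo m) with hP_def
  have heval : ∀ v : Fin d → ℂ, MvPolynomial.eval v P = 0 := by
    intro v
    have hmom := moment_one μ φ hμ hφ h v n
    have hexp : ∀ ξ : Sph d, (∑ j, v j * (((ξ : ESp d) j : ℝ) : ℂ)) ^ n * φ ξ
        = ∑ m ∈ Finset.piAntidiag Finset.univ n,
            ((Nat.multinomial Finset.univ m : ℂ) * ∏ j, v j ^ m j) *
              ((∏ j, (((ξ : ESp d) j : ℝ) : ℂ) ^ m j) * φ ξ) := by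
      intro ξ
      rw [Finset.sum_pow_eq_sum_piAntidiag, Finset.sum_mul]
      apply Finset.sum_congr rfl
      intro m _
      have : (∏ j, (v j * (((ξ : ESp d) j : ℝ) : ℂ)) ^ m j)
          = (∏ j, v j ^ m j) * ∏ j, (((ξ : ESp d) j : ℝ) : ℂ) ^ m j := by
        rw [← Finset.prod_mul_distrib]
        exact Finset.prod_congr rfl fun j _ => mul_pow _ _ _
      rw [this]
      ring
    have h1 : ∫ ξ : Sph d, (∑ j, v j * (((ξ : ESp d) j : ℝ) : ℂ)) ^ n * φ ξ ∂(sphM d)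
        = ∑ m ∈ Finset.piAntidiag Finset.univ n,
            ((Nat.multinomial Finset.univ m : ℂ) * ∏ j, v j ^ m j) * Mo m := by
      rw [integral_congr_ae (Filter.Eventually.of_forall hexp)]
      rw [integral_finset_sum _ (fun m _ => (hMo_int m).const_mul _)]
      apply Finset.sum_congr rfl
      intro m _
      rw [integral_const_mul]
    have h2 : MvPolynomial.eval v P
        = ∑ m ∈ Finset.piAntidiag Finset.univ n,
            ((Nat.multinomial Finset.univ m : ℂ) * ∏ j, v j ^ m j) * Mo m := by
      rw [hP_def, map_sum]
      apply Finset.sum_congr rfl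
      intro m _
      rw [MvPolynomial.eval_monomial]
      rw [Finsupp.prod_fintype _ _ (fun j => pow_zero (v j))]
      simp only [Finsupp.coe_equivFunOnFinite_symm]
      ring
    rw [h2, ← h1, hmom]
  have hP0 : P = 0 := by
    apply MvPolynomial.funext
    intro x
    rw [heval x, map_zero]
  have hk_mem : k ∈ Finset.piAntidiag Finset.univ n := by
    rw [Finset.mem_piAntidiag]
    exact ⟨hn_def.symm, fun i _ => Finset.mem_univ i⟩
  have hcoeff : MvPolynomial.coeff (Finsupp.equivFunOnFinite.symm k) P
      = (Nat.multinomial Finset.univ k : ℂ) * Mo k := by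
    rw [hP_def, MvPolynomial.coeff_sum]
    have hterm : ∀ m ∈ Finset.piAntidiag Finset.univ n,
        MvPolynomial.coeff (Finsupp.equivFunOnFinite.symm k)
          (MvPolynomial.monomial (Finsupp.equivFunOnFinite.symm m)
            ((Nat.multinomial Finset.univ m : ℂ) * Mo m))
        = if m = k then (Nat.multinomial Finset.univ m : ℂ) * Mo m else 0 := by
      intro m _
      rw [MvPolynomial.coeff_monomial]
      congr 1
      simp [EmbeddingLike.apply_eq_iff_eq]
    rw [Finset.sum_congr rfl hterm, Finset.sum_ite_eq' _ k _, if_pos hk_mem]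
  rw [hP0, MvPolynomial.coeff_zero] at hcoeff
  have hmult : (Nat.multinomial Finset.univ k : ℂ) ≠ 0 :=
    Nat.cast_ne_zero.2 (Nat.multinomial_pos _ _).ne'
  have := (mul_eq_zero.1 hcoeff.symm).resolve_left hmult
  exact this

/-- The sphere measure is positive on open sets. -/
lemma sphM_isOpenPosMeasure (hd0 : d ≠ 0) : (sphM d).IsOpenPosMeasure := by
  constructor
  intro U hU hne
  obtain ⟨V, hV, hUV⟩ := isOpen_induced_iff.mp hU
  set nmap : ESp d → ESp d := fun y => ‖y‖⁻¹ • y with hn_def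
  have hn_cont : ContinuousOn nmap {(0 : ESp d)}ᶜ := by
    refine ContinuousOn.smul (f := fun y : ESp d => ‖y‖⁻¹) (g := fun y => y) ?_ ?_
    · exact (continuous_norm.continuousOn).inv₀ fun y hy => norm_ne_zero_iff.2 hy
    · exact continuousOn_id
  have hWopen1 : IsOpen ({(0 : ESp d)}ᶜ ∩ nmap ⁻¹' V) :=
    hn_cont.isOpen_inter_preimage isOpen_compl_singleton hV
  set W := ({(0 : ESp d)}ᶜ ∩ nmap ⁻¹' V) ∩ Metric.ball 0 1 with hW_def
  have hWopen : IsOpen W := hWopen1.inter Metric.isOpen_ball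
  obtain ⟨x, hx⟩ := hne
  have hx_norm : ‖(x : ESp d)‖ = 1 := by
    simpa using mem_sphere_zero_iff_norm.mp x.2
  have hx0 : (x : ESp d) ≠ 0 := by
    intro h0; rw [h0] at hx_norm; simp at hx_norm
  have hxV : (x : ESp d) ∈ V := by rw [← hUV] at hx; exact hx
  set y : ESp d := (1/2 : ℝ) • (x : ESp d) with hy_def
  have hy_norm : ‖y‖ = 1/2 := by
    rw [hy_def, norm_smul, hx_norm]; norm_num
  have hy0 : y ≠ 0 := by
    intro h0; rw [h0] at hy_norm; simp at hy_norm
  have hy_map : nmap y = (x : ESp d) := by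
    simp only [hn_def]
    rw [hy_norm, hy_def, smul_smul]
    norm_num
  have hyW : y ∈ W := by
    refine ⟨⟨hy0, ?_⟩, ?_⟩
    · rw [Set.mem_preimage, hy_map]; exact hxV
    · rw [Metric.mem_ball, dist_zero_right, hy_norm]; norm_num
  have hsub : W ⊆ Set.Ioo (0:ℝ) 1 • (Subtype.val '' U) := by
    intro z hz
    obtain ⟨⟨hz0, hzV⟩, hzball⟩ := hz
    have hz0' : z ≠ (0 : ESp d) := hz0
    have hzn : (0:ℝ) < ‖z‖ := norm_pos_iff.2 hz0'
    have hzlt : ‖z‖ < 1 := by rwa [Metric.mem_ball, dist_zero_right] at hzball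
    have hmem_sph : nmap z ∈ Metric.sphere (0 : ESp d) 1 := by
      rw [mem_sphere_zero_iff_norm]
      simp only [hn_def]
      rw [norm_smul, norm_inv, norm_norm]
      field_simp
    have hzz : (‖z‖ : ℝ) • nmap z = z := by
      simp only [hn_def]
      rw [smul_smul, mul_inv_cancel₀ (ne_of_gt hzn), one_smul]
    rw [← hzz]
    apply Set.smul_mem_smul (Set.mem_Ioo.mpr ⟨hzn, hzlt⟩)
    refine ⟨⟨nmap z, hmem_sph⟩, ?_, rfl⟩
    show (⟨nmap z, hmem_sph⟩ : Sph d) ∈ U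
    rw [← hUV]
    exact hzV
  intro hzero
  rw [Measure.toSphere_apply' (volume : Measure (ESp d)) hU.measurableSet] at hzero
  rcases mul_eq_zero.1 hzero with h1 | h1
  · have hdim : Module.finrank ℝ (ESp d) = d := finrank_euclideanSpace_fin
    rw [hdim] at h1
    exact hd0 (by exact_mod_cast h1)
  · have hpos : (0:ENNReal) < (volume : Measure (ESp d)) W :=
      hWopen.measure_pos volume ⟨y, hyW⟩
    have hle := measure_mono (μ := (volume : Measure (ESp d))) hsub
    rw [h1] at hle
    exact absurd (le_antisymm hle zero_le) (ne_of_gt hpos)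

end Main

end StmtHelpers

/-- If `μ ∈ ℂ` is not a non-negative integer and a continuous function `φ` on the unit
sphere `S^{d-1} ⊂ ℝ^d` satisfies `∫ (1 - ∑ u_j ξ_j)^μ φ(ξ) dξ = 0` for all `u ∈ ℂ^d` with
`∑ |u_j|² < 1`, then `φ = 0`. -/
theorem stmt_5 (d : ℕ) (hd : 2 ≤ d) (μ : ℂ) (hμ : ∀ k : ℕ, μ ≠ (k : ℂ))
    (φ : Metric.sphere (0 : EuclideanSpace ℝ (Fin d)) 1 → ℂ) (hφ : Continuous φ)
    (h : ∀ u : Fin d → ℂ, (∑ j, ‖u j‖ ^ 2) < 1 →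
      (∫ ξ : Metric.sphere (0 : EuclideanSpace ℝ (Fin d)) 1,
        (1 - ∑ j, u j * (((ξ : EuclideanSpace ℝ (Fin d)) j : ℝ) : ℂ)) ^ μ * φ ξ
        ∂(Measure.toSphere (volume : Measure (EuclideanSpace ℝ (Fin d))))) = 0) :
    φ = 0 := by
  classical
  have hmom : ∀ k : Fin d → ℕ,
      ∫ ξ : Sph d, (∏ j, (((ξ : ESp d) j : ℝ) : ℂ) ^ k j) * φ ξ ∂(sphM d) = 0 :=
    moment_two μ φ hμ hφ h
  haveI hop : (sphM d).IsOpenPosMeasure := sphM_isOpenPosMeasure (by omega)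
  -- the subalgebra of polynomial functions
  set coordCM : Fin d → C(Sph d, ℝ) := fun j =>
    ⟨fun ξ => (ξ : ESp d) j, (continuous_apply j).comp (Continuous.comp (PiLp.continuous_ofLp 2 _) continuous_subtype_val)⟩ with hcoord_def
  set A : Subalgebra ℝ C(Sph d, ℝ) := Algebra.adjoin ℝ (Set.range coordCM) with hA_def
  have hsep : A.SeparatesPoints := by
    intro ξ η hne
    have hj : ∃ j, (ξ : ESp d) j ≠ (η : ESp d) j := by
      by_contra hc
      push_neg at hc
      exact hne (Subtype.ext (WithLp.ofLp_injective 2 (funext hc)))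
    obtain ⟨j, hj⟩ := hj
    refine ⟨(coordCM j : Sph d → ℝ), ⟨coordCM j, ?_, rfl⟩, hj⟩
    exact Algebra.subset_adjoin ⟨j, rfl⟩
  have hdense := ContinuousMap.subalgebra_topologicalClosure_eq_top_of_separatesPoints A hsep
  -- the linear functional
  set L : C(Sph d, ℝ) → ℂ := fun ψ => ∫ ξ, ((ψ ξ : ℝ) : ℂ) * φ ξ ∂(sphM d) with hL_def
  have hint : ∀ ψ : C(Sph d, ℝ), Integrable (fun ξ => ((ψ ξ : ℝ) : ℂ) * φ ξ) (sphM d) :=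
    fun ψ => cont_int _ ((Complex.continuous_ofReal.comp ψ.continuous).mul hφ)
  obtain ⟨C, hC0, hC⟩ : ∃ C : ℝ, 0 ≤ C ∧ ∀ ξ, ‖φ ξ‖ ≤ C := by
    obtain ⟨C, hC⟩ := (isCompact_range hφ.norm).bddAbove
    exact ⟨max C 0, le_max_right _ _, fun ξ => le_trans (hC ⟨ξ, rfl⟩) (le_max_left _ _)⟩
  have hLcont : Continuous L := by
    set T := ((sphM d) Set.univ).toReal with hT_def
    have hT0 : (0:ℝ) ≤ T := ENNReal.toReal_nonneg
    apply (LipschitzWith.of_dist_le_mul (K := ⟨C * T, mul_nonneg hC0 hT0⟩) ?_).continuous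
    intro ψ₁ ψ₂
    rw [dist_eq_norm]
    have hdiff : L ψ₁ - L ψ₂ = ∫ ξ, (((ψ₁ ξ - ψ₂ ξ : ℝ)) : ℂ) * φ ξ ∂(sphM d) := by
      simp only [hL_def]
      rw [← integral_sub (hint ψ₁) (hint ψ₂)]
      apply integral_congr_ae
      apply Filter.Eventually.of_forall
      intro ξ
      push_cast
      ring
    rw [hdiff]
    have hb : ∀ ξ : Sph d, ‖(((ψ₁ ξ - ψ₂ ξ : ℝ)) : ℂ) * φ ξ‖ ≤ dist ψ₁ ψ₂ * C := by
      intro ξ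
      rw [norm_mul, Complex.norm_real]
      apply mul_le_mul _ (hC ξ) (norm_nonneg _) dist_nonneg
      rw [Real.norm_eq_abs, ← Real.dist_eq]
      exact ContinuousMap.dist_apply_le_dist ξ
    calc ‖∫ ξ, (((ψ₁ ξ - ψ₂ ξ : ℝ)) : ℂ) * φ ξ ∂(sphM d)‖
        ≤ dist ψ₁ ψ₂ * C * T :=
          norm_integral_le_of_norm_le_const (Filter.Eventually.of_forall hb)
      _ = ↑(⟨C * T, mul_nonneg hC0 hT0⟩ : NNReal) * dist ψ₁ ψ₂ := by
          push_cast
          ring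
  -- products of coordinates are monomials
  have hmono : ∀ q : C(Sph d, ℝ), q ∈ Submonoid.closure (Set.range coordCM) →
      ∃ k : Fin d → ℕ, ∀ ξ : Sph d, q ξ = ∏ j, (ξ : ESp d) j ^ k j := by
    intro q hq
    induction hq using Submonoid.closure_induction with
    | mem q hq =>
      obtain ⟨j, rfl⟩ := hq
      refine ⟨fun l => if l = j then 1 else 0, fun ξ => ?_⟩
      have hite : ∀ l, (ξ : ESp d) l ^ (if l = j then 1 else 0)
          = if l = j then (ξ : ESp d) l else 1 := by
        intro l
        split <;> simp
      rw [Finset.prod_congr rfl fun l _ => hite l,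
        Finset.prod_ite_eq' Finset.univ j (fun l => (ξ : ESp d) l), if_pos (Finset.mem_univ j)]
      rfl
    | one => exact ⟨fun _ => 0, fun ξ => by simp [ContinuousMap.one_apply]⟩
    | mul q₁ q₂ hq₁ hq₂ ih₁ ih₂ =>
      obtain ⟨k₁, h₁⟩ := ih₁
      obtain ⟨k₂, h₂⟩ := ih₂
      refine ⟨k₁ + k₂, fun ξ => ?_⟩
      calc (q₁ * q₂) ξ = q₁ ξ * q₂ ξ := rfl
        _ = (∏ j, (ξ : ESp d) j ^ k₁ j) * ∏ j, (ξ : ESp d) j ^ k₂ j := by rw [h₁ ξ, h₂ ξ]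
        _ = ∏ j, (ξ : ESp d) j ^ (k₁ + k₂) j := by
            rw [← Finset.prod_mul_distrib]
            exact Finset.prod_congr rfl fun j _ => by rw [Pi.add_apply, pow_add]
  -- L vanishes on A
  have hLA : ∀ q ∈ Submodule.span ℝ (Submonoid.closure (Set.range coordCM) : Set C(Sph d, ℝ)),
      L q = 0 := by
    intro q hq'
    induction hq' using Submodule.span_induction with
    | mem q hqm =>
      obtain ⟨k, hk⟩ := hmono q hqm
      simp only [hL_def]
      rw [← hmom k]
      apply integral_congr_ae
      apply Filter.Eventually.of_forall
      intro ξ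
      simp only [hk ξ]
      push_cast
      ring
    | zero =>
      simp only [hL_def]
      have : ∀ ξ : Sph d, (((0 : C(Sph d, ℝ)) ξ : ℝ) : ℂ) * φ ξ = 0 := by
        intro ξ; simp
      rw [integral_congr_ae (Filter.Eventually.of_forall this)]
      simp
    | add x y hx hy ihx ihy =>
      have hadd : L (x + y) = L x + L y := by
        simp only [hL_def]
        rw [← integral_add (hint x) (hint y)]
        apply integral_congr_ae
        apply Filter.Eventually.of_forall
        intro ξ
        simp only [ContinuousMap.add_apply]
        push_cast
        ring
      rw [hadd, ihx, ihy, add_zero]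
    | smul r x hx ihx =>
      have hsmul : L (r • x) = (r : ℂ) * L x := by
        simp only [hL_def]
        rw [← integral_const_mul]
        apply integral_congr_ae
        apply Filter.Eventually.of_forall
        intro ξ
        simp only [ContinuousMap.smul_apply, smul_eq_mul]
        push_cast
        ring
      rw [hsmul, ihx, mul_zero]
  -- L vanishes everywhere
  have hLall : ∀ ψ : C(Sph d, ℝ), L ψ = 0 := by
    intro ψ
    have hψ : ψ ∈ A.topologicalClosure := by rw [hdense]; trivial
    have hψ' : ψ ∈ closure (A : Set C(Sph d, ℝ)) := hψ
    have hclosed : IsClosed {ψ : C(Sph d, ℝ) | L ψ = 0} :=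
      isClosed_eq hLcont continuous_const
    have hAsub : (A : Set C(Sph d, ℝ)) ⊆ {ψ : C(Sph d, ℝ) | L ψ = 0} := by
      intro q hq
      apply hLA
      have : q ∈ Subalgebra.toSubmodule A := hq
      rwa [hA_def, Algebra.adjoin_eq_span] at this
    exact closure_minimal hAsub hclosed hψ'
  -- apply to re and im parts of φ
  set ψre : C(Sph d, ℝ) := ⟨fun ξ => (φ ξ).re, Complex.continuous_re.comp hφ⟩ with hre_def
  set ψim : C(Sph d, ℝ) := ⟨fun ξ => (φ ξ).im, Complex.continuous_im.comp hφ⟩ with him_def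
  have h1 := hLall ψre
  have h2 := hLall ψim
  simp only [hL_def, hre_def, him_def] at h1 h2
  have hconj : ∫ ξ, ((Complex.normSq (φ ξ) : ℝ) : ℂ) ∂(sphM d) = 0 := by
    have he : ∀ ξ : Sph d, ((Complex.normSq (φ ξ) : ℝ) : ℂ)
        = (((φ ξ).re : ℝ) : ℂ) * φ ξ - Complex.I * ((((φ ξ).im : ℝ) : ℂ) * φ ξ) := by
      intro ξ
      apply Complex.ext <;>
        simp [Complex.normSq_apply, Complex.mul_re, Complex.mul_im] <;> ring
    have hire : Integrable (fun ξ : Sph d => (((φ ξ).re : ℝ) : ℂ) * φ ξ) (sphM d) := hint ψre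
    have hiim : Integrable (fun ξ : Sph d => (((φ ξ).im : ℝ) : ℂ) * φ ξ) (sphM d) := hint ψim
    have h1' : ∫ ξ : Sph d, (((φ ξ).re : ℝ) : ℂ) * φ ξ ∂(sphM d) = 0 := h1
    have h2' : ∫ ξ : Sph d, (((φ ξ).im : ℝ) : ℂ) * φ ξ ∂(sphM d) = 0 := h2
    rw [integral_congr_ae (Filter.Eventually.of_forall he)]
    rw [integral_sub hire (hiim.const_mul Complex.I)]
    rw [integral_const_mul]
    rw [h1', h2']
    simp
  have hns : ∫ ξ, Complex.normSq (φ ξ) ∂(sphM d) = 0 := by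
    have hic : Integrable (fun ξ : Sph d => ((Complex.normSq (φ ξ) : ℝ) : ℂ)) (sphM d) :=
      cont_int _ (Complex.continuous_ofReal.comp (Complex.continuous_normSq.comp hφ))
    have h4 := ContinuousLinearMap.integral_comp_comm Complex.reCLM hic
    simp only [Complex.reCLM_apply, Complex.ofReal_re] at h4
    rw [h4, hconj, Complex.zero_re]
  have hnint : Integrable (fun ξ : Sph d => Complex.normSq (φ ξ)) (sphM d) :=
    cont_int _ (Complex.continuous_normSq.comp hφ)
  have hae : (fun ξ : Sph d => Complex.normSq (φ ξ)) =ᵐ[sphM d] 0 :=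
    (integral_eq_zero_iff_of_nonneg (fun ξ => Complex.normSq_nonneg _) hnint).1 hns
  have heq : (fun ξ : Sph d => Complex.normSq (φ ξ)) = 0 :=
    (Continuous.ae_eq_iff_eq (sphM d) (Complex.continuous_normSq.comp hφ)
      continuous_const).1 hae
  funext ξ
  have := congrFun heq ξ
  simp only [Pi.zero_apply] at this
  exact Complex.normSq_eq_zero.1 this
end

section
/- For real λ close to the non-negative integer n, writing λ = n + ετs with s = |λ-n| ∈ (0,1), τ = (-1)^{n-l+1}, ε = sign((-1)^{n-l+1}(λ-n)), and l ≤ n, the normalization factor satisfies ε γ_l(λ) > 0 and ε γ_l(λ) = π Γ(l+n+d-1+ετs) / (2 sin(πs) Γ(1+n-l+ετs)) ~ Γ(l+n+d-1) / (2 (n-l)! s) as s → 0. -/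
open Filter Real

lemma aux_sin : Tendsto (fun s : ℝ => π * s / Real.sin (π * s)) (nhdsWithin 0 (Set.Ioi 0)) (nhds 1) := by
  have h1 : Tendsto (fun x : ℝ => Real.sin x / x) (nhdsWithin 0 {0}ᶜ) (nhds 1) := by
    have h := (Real.hasDerivAt_sin 0)
    rw [hasDerivAt_iff_tendsto_slope] at h
    have : (slope Real.sin 0) = fun x : ℝ => Real.sin x / x := by
      funext x; simp [slope_def_field, div_eq_inv_mul]
    rw [this, Real.cos_zero] at h
    exact h
  have h2 : Tendsto (fun s : ℝ => π * s) (nhdsWithin 0 (Set.Ioi 0)) (nhdsWithin 0 {0}ᶜ) := by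
    apply tendsto_nhdsWithin_of_tendsto_nhds_of_eventually_within
    · have : Tendsto (fun s : ℝ => π * s) (nhds 0) (nhds (π * 0)) :=
        (continuous_const.mul continuous_id).tendsto 0
      simpa using this.mono_left nhdsWithin_le_nhds
    · filter_upwards [self_mem_nhdsWithin] with s hs
      exact ne_of_gt (mul_pos Real.pi_pos hs)
  have h3 : Tendsto (fun s : ℝ => Real.sin (π * s) / (π * s)) (nhdsWithin 0 (Set.Ioi 0)) (nhds 1) :=
    h1.comp h2
  have h4 := h3.inv₀ one_ne_zero
  rw [inv_one] at h4
  apply h4.congr'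
  filter_upwards [self_mem_nhdsWithin] with s hs
  rw [inv_div]

lemma aux_gamma_neg (m : ℕ) (σ s : ℝ) (hσ : σ = 1 ∨ σ = -1) (hs : 0 < s) (hs1 : s < 1) :
    Real.Gamma (-(m : ℝ) - σ * s) =
      (-1 : ℝ) ^ (m + 1) * σ * π / (Real.sin (π * s) * Real.Gamma (1 + (m : ℝ) + σ * s)) := by
  have harg : (0:ℝ) < 1 + (m : ℝ) + σ * s := by
    rcases hσ with h | h <;> subst h <;> nlinarith [Nat.cast_nonneg (α := ℝ) m]
  have hΓpos := Real.Gamma_pos_of_pos harg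
  have hrefl := Real.Gamma_mul_Gamma_one_sub (-(m : ℝ) - σ * s)
  have h1 : (1 : ℝ) - (-(m : ℝ) - σ * s) = 1 + (m : ℝ) + σ * s := by ring
  rw [h1] at hrefl
  set e : ℝ := (-1 : ℝ) ^ (m + 1) * σ with he_def
  have he : e * e = 1 := by
    have h2 : ((-1:ℝ)) ^ (m+1) * ((-1:ℝ)) ^ (m+1) = 1 := by
      rw [← pow_add]; exact Even.neg_one_pow ⟨m+1, rfl⟩
    rcases hσ with h | h <;> subst h <;> rw [he_def] <;> linear_combination h2
  have hsin : Real.sin (π * (-(m : ℝ) - σ * s)) = e * Real.sin (π * s) := by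
    have harg2 : π * (-(m : ℝ) - σ * s) = -(π * (σ * s)) + ((-(m:ℤ) : ℤ) : ℝ) * π := by
      push_cast; ring
    rw [harg2, Real.sin_add_int_mul_pi, Real.sin_neg]
    have hz : ((-1 : ℝ)) ^ (-(m:ℤ)) = (-1 : ℝ) ^ m := by
      rw [zpow_neg, ← inv_zpow, inv_neg, inv_one, zpow_natCast]
    rw [hz, he_def, pow_succ]
    rcases hσ with h | h <;> subst h <;> simp [Real.sin_neg]
  have hsinpos : 0 < Real.sin (π * s) := by
    apply Real.sin_pos_of_pos_of_lt_pi (by positivity)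
    nlinarith [Real.pi_pos]
  rw [hsin] at hrefl
  have hene : e ≠ 0 := by rcases hσ with h | h <;> simp [he_def, h]
  have hD : e * Real.sin (π * s) ≠ 0 := mul_ne_zero hene hsinpos.ne'
  rw [eq_div_iff hD] at hrefl
  have key : Real.Gamma (-(m : ℝ) - σ * s) * Real.Gamma (1 + (m : ℝ) + σ * s) *
      Real.sin (π * s) * e = π := by linear_combination hrefl
  rw [eq_div_iff (mul_ne_zero hsinpos.ne' hΓpos.ne')]
  linear_combination e * key -
    (Real.Gamma (-(m : ℝ) - σ * s) * Real.Gamma (1 + (m : ℝ) + σ * s) * Real.sin (π * s)) * he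

/-- For `λ = n + ετs` with `s = |λ - n| ∈ (0,1)`, `τ = (-1)^{n-l+1}`,
`ε = sign((-1)^{n-l+1}(λ-n))` and `l ≤ n`, the normalization factor
`γ_l(λ) = (1/2) Γ(l-λ) Γ(λ+l+d-1)` satisfies `ε γ_l(λ) > 0`,
`ε γ_l(λ) = π Γ(l+n+d-1+ετs) / (2 sin(πs) Γ(1+n-l+ετs))`, and
`ε γ_l(λ) ~ Γ(l+n+d-1) / (2 (n-l)! s)` as `s → 0⁺`. -/
theorem stmt_15 (d n l : ℕ) (hd : 2 ≤ d) (hl : l ≤ n)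
    (σ : ℝ) (hσ : σ = 1 ∨ σ = -1) :
    -- here `σ = ετ` (so that `λ = n + σ s`), `τ = (-1)^{n-l+1}`, `ε = σ τ`
    (∀ s : ℝ, 0 < s → s < 1 →
      0 < (σ * (-1 : ℝ) ^ (n - l + 1)) *
          ((1 / 2) * Real.Gamma ((l : ℝ) - ((n : ℝ) + σ * s)) *
            Real.Gamma (((n : ℝ) + σ * s) + l + d - 1)) ∧
      (σ * (-1 : ℝ) ^ (n - l + 1)) *
          ((1 / 2) * Real.Gamma ((l : ℝ) - ((n : ℝ) + σ * s)) *
            Real.Gamma (((n : ℝ) + σ * s) + l + d - 1)) =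
        π * Real.Gamma ((l : ℝ) + n + d - 1 + σ * s) /
          (2 * Real.sin (π * s) * Real.Gamma (1 + (n : ℝ) - l + σ * s))) ∧
    Tendsto (fun s : ℝ =>
        ((σ * (-1 : ℝ) ^ (n - l + 1)) *
            ((1 / 2) * Real.Gamma ((l : ℝ) - ((n : ℝ) + σ * s)) *
              Real.Gamma (((n : ℝ) + σ * s) + l + d - 1))) /
          (Real.Gamma ((l : ℝ) + n + d - 1) / (2 * (Nat.factorial (n - l)) * s)))
      (nhdsWithin 0 (Set.Ioi 0)) (nhds 1) := by
  set m : ℕ := n - l with hm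
  have hmc : ((m : ℝ)) = (n : ℝ) - l := by rw [hm, Nat.cast_sub hl]
  have hσ2 : σ * σ = 1 := by rcases hσ with h | h <;> subst h <;> norm_num
  have hσabs : |σ| = 1 := by rcases hσ with h | h <;> subst h <;> norm_num
  have hσle : ∀ s : ℝ, 0 < s → s < 1 → -1 < σ * s ∧ σ * s < 1 := by
    intro s hs hs1
    rcases hσ with h | h <;> subst h <;> constructor <;> nlinarith
  have hCpos : (0:ℝ) < (l : ℝ) + n + d - 1 := by
    have : (2:ℝ) ≤ d := by exact_mod_cast hd
    have h1 : (0:ℝ) ≤ (l:ℝ) := Nat.cast_nonneg l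
    have h2 : (0:ℝ) ≤ (n:ℝ) := Nat.cast_nonneg n
    linarith
  have hCge1 : (1:ℝ) ≤ (l : ℝ) + n + d - 1 := by
    have : (2:ℝ) ≤ d := by exact_mod_cast hd
    have h1 : (0:ℝ) ≤ (l:ℝ) := Nat.cast_nonneg l
    have h2 : (0:ℝ) ≤ (n:ℝ) := Nat.cast_nonneg n
    linarith
  -- the equality / positivity part
  have main : ∀ s : ℝ, 0 < s → s < 1 →
      (σ * (-1 : ℝ) ^ (n - l + 1)) *
          ((1 / 2) * Real.Gamma ((l : ℝ) - ((n : ℝ) + σ * s)) *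
            Real.Gamma (((n : ℝ) + σ * s) + l + d - 1)) =
        π * Real.Gamma ((l : ℝ) + n + d - 1 + σ * s) /
          (2 * Real.sin (π * s) * Real.Gamma (1 + (n : ℝ) - l + σ * s)) := by
    intro s hs hs1
    obtain ⟨hb1, hb2⟩ := hσle s hs hs1
    have harg1 : (l : ℝ) - ((n : ℝ) + σ * s) = -(m : ℝ) - σ * s := by rw [hmc]; ring
    have harg2 : ((n : ℝ) + σ * s) + l + d - 1 = (l : ℝ) + n + d - 1 + σ * s := by ring
    have harg3 : 1 + (n : ℝ) - l + σ * s = 1 + (m : ℝ) + σ * s := by rw [hmc]; ring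
    rw [harg1, harg2, harg3, aux_gamma_neg m σ s hσ hs hs1]
    have hsinpos : 0 < Real.sin (π * s) := by
      apply Real.sin_pos_of_pos_of_lt_pi (by positivity)
      nlinarith [Real.pi_pos]
    have hbpos : (0:ℝ) < 1 + (m : ℝ) + σ * s := by
      have : (0:ℝ) ≤ (m : ℝ) := Nat.cast_nonneg m
      linarith
    have hΓb := Real.Gamma_pos_of_pos hbpos
    have hp : ((-1:ℝ)) ^ (m+1) * ((-1:ℝ)) ^ (m+1) = 1 := by
      rw [← pow_add]; exact Even.neg_one_pow ⟨m+1, rfl⟩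
    have hee : (σ * (-1:ℝ) ^ (m+1)) * ((-1:ℝ) ^ (m+1) * σ) = 1 := by
      linear_combination (σ * σ) * hp + hσ2
    linear_combination (π * Real.Gamma ((l : ℝ) + n + d - 1 + σ * s) /
      (2 * Real.sin (π * s) * Real.Gamma (1 + (m : ℝ) + σ * s))) * hee
  refine ⟨fun s hs hs1 => ⟨?_, main s hs hs1⟩, ?_⟩
  · rw [main s hs hs1]
    obtain ⟨hb1, hb2⟩ := hσle s hs hs1
    have hsinpos : 0 < Real.sin (π * s) := by
      apply Real.sin_pos_of_pos_of_lt_pi (by positivity)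
      nlinarith [Real.pi_pos]
    have hbpos : (0:ℝ) < 1 + (n : ℝ) - l + σ * s := by
      have : (l:ℝ) ≤ n := by exact_mod_cast hl
      linarith
    have hCspos : (0:ℝ) < (l : ℝ) + n + d - 1 + σ * s := by linarith [hCge1, hb1]
    positivity
  · -- the asymptotic part
    have hΓCat : ContinuousAt Real.Gamma ((l : ℝ) + n + d - 1) := by
      refine (Real.differentiableAt_Gamma fun k => ?_).continuousAt
      have : (0:ℝ) ≤ (k:ℝ) := Nat.cast_nonneg k
      intro h; rw [h] at hCpos; linarith
    have hΓbat : ContinuousAt Real.Gamma (1 + (m : ℝ)) := by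
      refine (Real.differentiableAt_Gamma fun k => ?_).continuousAt
      have h1 : (0:ℝ) ≤ (k:ℝ) := Nat.cast_nonneg k
      have h2 : (0:ℝ) ≤ (m:ℝ) := Nat.cast_nonneg m
      intro h; nlinarith [h]
    have hΓbval : Real.Gamma (1 + (m : ℝ)) = (Nat.factorial m : ℝ) := by
      rw [add_comm]; exact_mod_cast Real.Gamma_nat_eq_factorial m
    have hlim1 : Tendsto (fun s : ℝ => (l : ℝ) + n + d - 1 + σ * s)
        (nhdsWithin 0 (Set.Ioi 0)) (nhds ((l : ℝ) + n + d - 1)) := by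
      have : Tendsto (fun s : ℝ => (l : ℝ) + n + d - 1 + σ * s) (nhds 0)
          (nhds ((l : ℝ) + n + d - 1 + σ * 0)) :=
        (continuous_const.add (continuous_const.mul continuous_id)).tendsto 0
      simpa using this.mono_left nhdsWithin_le_nhds
    have hlim2 : Tendsto (fun s : ℝ => 1 + (m : ℝ) + σ * s)
        (nhdsWithin 0 (Set.Ioi 0)) (nhds (1 + (m : ℝ))) := by
      have : Tendsto (fun s : ℝ => 1 + (m : ℝ) + σ * s) (nhds 0)
          (nhds (1 + (m : ℝ) + σ * 0)) :=
        (continuous_const.add (continuous_const.mul continuous_id)).tendsto 0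
      simpa using this.mono_left nhdsWithin_le_nhds
    have hΓC := hΓCat.tendsto.comp hlim1
    have hΓb := hΓbat.tendsto.comp hlim2
    have hΓCne : Real.Gamma ((l : ℝ) + n + d - 1) ≠ 0 := (Real.Gamma_pos_of_pos hCpos).ne'
    have hfacne : (Nat.factorial m : ℝ) ≠ 0 := by
      exact_mod_cast (Nat.factorial_pos m).ne'
    have hG : Tendsto (fun s : ℝ =>
        (π * s / Real.sin (π * s)) *
          (Real.Gamma ((l : ℝ) + n + d - 1 + σ * s) / Real.Gamma ((l : ℝ) + n + d - 1)) *
          ((Nat.factorial m : ℝ) / Real.Gamma (1 + (m : ℝ) + σ * s)))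
        (nhdsWithin 0 (Set.Ioi 0)) (nhds 1) := by
      have t1 := aux_sin
      have t2 : Tendsto (fun s : ℝ =>
          Real.Gamma ((l : ℝ) + n + d - 1 + σ * s) / Real.Gamma ((l : ℝ) + n + d - 1))
          (nhdsWithin 0 (Set.Ioi 0)) (nhds 1) := by
        have := hΓC.div tendsto_const_nhds hΓCne
        simpa [div_self hΓCne, Function.comp_def, Pi.div_def] using this
      have t3 : Tendsto (fun s : ℝ =>
          (Nat.factorial m : ℝ) / Real.Gamma (1 + (m : ℝ) + σ * s))
          (nhdsWithin 0 (Set.Ioi 0)) (nhds 1) := by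
        have h0 := (tendsto_const_nhds (x := (Nat.factorial m : ℝ))
          (f := nhdsWithin (0:ℝ) (Set.Ioi 0))).div hΓb (by rw [hΓbval]; exact hfacne)
        rw [hΓbval] at h0
        simpa [div_self hfacne, Function.comp_def, Pi.div_def] using h0
      have := (t1.mul t2).mul t3
      simpa using this
    refine hG.congr' ?_
    filter_upwards [Ioo_mem_nhdsGT_of_mem (Set.mem_Ico.2 ⟨le_refl (0:ℝ), zero_lt_one⟩)] with s hs
    obtain ⟨hs0, hs1⟩ := hs
    have hsinpos : 0 < Real.sin (π * s) := by
      apply Real.sin_pos_of_pos_of_lt_pi (by positivity)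
      nlinarith [Real.pi_pos]
    obtain ⟨hb1, hb2⟩ := hσle s hs0 hs1
    have hbpos : (0:ℝ) < 1 + (m : ℝ) + σ * s := by
      have : (0:ℝ) ≤ (m : ℝ) := Nat.cast_nonneg m
      linarith
    have hΓbpos := Real.Gamma_pos_of_pos hbpos
    have harg3 : 1 + (n : ℝ) - l + σ * s = 1 + (m : ℝ) + σ * s := by rw [hmc]; ring
    rw [main s hs0 hs1, harg3]
    field_simp
end
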